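/- For q ≥ 3 and positive reals a₁,…,a_q, one has the reduction identity g_{a₁,…,a_q}(u) = g_{a₁/a_q,…,a_{q−1}/a_q, 1}(g_{a_q,…,a_q}(u)) for all u ∈ [0,1], where g_{a_q,…,a_q}(u) = u/(a_q + (1−a_q)u). -/

import Mathlib

noncomputable def g (q : ℕ) (a : ℕ → ℝ) (u : ℝ) : ℝ :=
  (q : ℝ) ^ q * u * (∏ i ∈ Finset.Icc 2 q, (a i + u - a i * u)) /
    ((∑ i ∈ Finset.Icc 1 q, a i) - ((∑ i ∈ Finset.Icc 1 q, a i) - q) * u) ^ q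

theorem stmt_8 (q : ℕ) (hq : 3 ≤ q) (a : ℕ → ℝ)
    (ha : ∀ i ∈ Finset.Icc 1 q, 0 < a i)
    (u : ℝ) (hu : u ∈ Set.Icc (0:ℝ) 1) :
    g q a u =
      g q (fun i => if i = q then 1 else a i / a q)
        (u / (a q + (1 - a q) * u)) := by
  obtain ⟨hu0, hu1⟩ := hu
  have hqmem : q ∈ Finset.Icc 1 q := by simp; omega
  have haq : 0 < a q := ha q hqmem
  set d := a q + (1 - a q) * u with hd_def
  have hd : 0 < d := by
    have h1 : 0 ≤ a q * (1 - u) := mul_nonneg haq.le (by linarith)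
    rcases hu0.eq_or_lt with h | h
    · simp [hd_def, ← h, haq]
    · nlinarith
  set S := ∑ i ∈ Finset.Icc 1 q, a i with hS_def
  have hS : 0 < S := Finset.sum_pos ha ⟨q, hqmem⟩
  set D := S - (S - q) * u with hD_def
  have hq3 : (3:ℝ) ≤ (q:ℝ) := by exact_mod_cast hq
  have hD : 0 < D := by
    rcases hu0.eq_or_lt with h | h
    · simp [hD_def, ← h, hS]
    · have h1 : 0 ≤ S * (1 - u) := mul_nonneg hS.le (by linarith)
      have h2 : 0 < (q:ℝ) * u := mul_pos (by linarith) h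
      nlinarith
  have hprod : (∏ i ∈ Finset.Icc 2 q,
      ((if i = q then 1 else a i / a q) + u / d - (if i = q then 1 else a i / a q) * (u / d)))
      = (∏ i ∈ Finset.Icc 2 q, (a i + u - a i * u)) / d ^ (q - 1) := by
    have hcard : (Finset.Icc 2 q).card = q - 1 := by
      rw [Nat.card_Icc]; omega
    rw [← hcard, ← Finset.prod_const, ← Finset.prod_div_distrib]
    apply Finset.prod_congr rfl
    intro i hi
    by_cases h : i = q
    · subst h
      simp only [if_pos rfl, if_true]
      field_simp [hd_def]
      ring
    · simp only [if_neg h]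
      field_simp
      ring
  have hsum : (∑ i ∈ Finset.Icc 1 q, (if i = q then 1 else a i / a q)) = S / a q := by
    rw [hS_def, Finset.sum_div]
    apply Finset.sum_congr rfl
    intro i hi
    by_cases h : i = q
    · subst h; simp [div_self haq.ne']
    · simp [h]
  have hden : S / a q - (S / a q - q) * (u / d) = D / d := by
    rw [hD_def]
    field_simp
    ring
  have hdq : d ^ (q - 1) * d = d ^ q := by
    rw [← pow_succ]; congr 1; omega
  simp only [g, hprod, hsum, hden]
  rw [← hS_def, ← hD_def]
  rw [div_pow]
  field_simp
  rw [← hdq]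
  ring
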